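/- Suppose M is an n×n real matrix with M = H L H⁻¹, ‖L‖ ≤ 1 - γ, ‖H‖‖H⁻¹‖ ≤ κ for 0 < γ ≤ 1, κ ≥ 1, and let Q, R' be positive semidefinite matrices of appropriate sizes with ‖Q + R'‖ ≤ c. Then the matrix P := Σ_{t=0}^∞ (M^t)ᵀ (Q + R') M^t is well-defined (the series converges) and satisfies ‖P‖ ≤ c κ² / γ. -/

import Mathlib

open Matrix
open scoped Matrix.Norms.L2Operator

theorem stmt_2 {n : ℕ} (M H L Q R' : Matrix (Fin n) (Fin n) ℝ)
    (hH : IsUnit H) (hM : M = H * L * H⁻¹)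
    (γ κ c : ℝ) (hγ0 : 0 < γ) (hγ1 : γ ≤ 1) (hκ : 1 ≤ κ)
    (hL : ‖L‖ ≤ 1 - γ) (hHκ : ‖H‖ * ‖H⁻¹‖ ≤ κ)
    (hQ : Q.PosSemidef) (hR : R'.PosSemidef) (hc : ‖Q + R'‖ ≤ c) :
    Summable (fun t : ℕ => (M ^ t)ᵀ * (Q + R') * M ^ t) ∧
      ‖∑' t : ℕ, (M ^ t)ᵀ * (Q + R') * M ^ t‖ ≤ c * κ ^ 2 / γ := by
  set S := Q + R' with hS
  have hc0 : 0 ≤ c := le_trans (norm_nonneg _) hc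
  have hdet : IsUnit H.det := (Matrix.isUnit_iff_isUnit_det H).mp hH
  have hHinv : H⁻¹ * H = 1 := nonsing_inv_mul _ hdet
  have hHinv' : H * H⁻¹ = 1 := mul_nonsing_inv _ hdet
  have hpow : ∀ t : ℕ, M ^ t = H * L ^ t * H⁻¹ := by
    intro t
    induction t with
    | zero => simp [hHinv']
    | succ t ih =>
      rw [pow_succ, ih, hM, pow_succ]
      calc H * L ^ t * H⁻¹ * (H * L * H⁻¹)
          = H * L ^ t * (H⁻¹ * H) * (L * H⁻¹) := by noncomm_ring
        _ = H * (L ^ t * L) * H⁻¹ := by rw [hHinv]; noncomm_ring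
  have hγ' : (0:ℝ) ≤ 1 - γ := le_trans (norm_nonneg L) hL
  have hγ'' : 1 - γ < 1 := by linarith
  have hone : ‖(1 : Matrix (Fin n) (Fin n) ℝ)‖ ≤ 1 := by
    rw [Matrix.cstar_norm_def, _root_.map_one]
    exact ContinuousLinearMap.norm_id_le
  have hLt : ∀ t : ℕ, ‖L ^ t‖ ≤ (1 - γ) ^ t := by
    intro t
    cases t with
    | zero => simpa using hone
    | succ t =>
      calc ‖L ^ (t+1)‖ ≤ ‖L‖ ^ (t+1) := norm_pow_le' L t.succ_pos
        _ ≤ (1 - γ) ^ (t+1) := pow_le_pow_left₀ (norm_nonneg L) hL _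
  have hMt : ∀ t : ℕ, ‖M ^ t‖ ≤ κ * (1 - γ) ^ t := by
    intro t
    rw [hpow t]
    calc ‖H * L ^ t * H⁻¹‖ ≤ ‖H‖ * ‖L ^ t‖ * ‖H⁻¹‖ := by
          refine le_trans (norm_mul_le _ _) ?_
          gcongr; exact norm_mul_le _ _
      _ ≤ ‖H‖ * (1 - γ) ^ t * ‖H⁻¹‖ := by gcongr; exact hLt t
      _ = (‖H‖ * ‖H⁻¹‖) * (1 - γ) ^ t := by ring
      _ ≤ κ * (1 - γ) ^ t := by gcongr
  have hbound : ∀ t : ℕ, ‖(M ^ t)ᵀ * S * M ^ t‖ ≤ c * κ ^ 2 * (1 - γ) ^ t := by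
    intro t
    have hT : ‖(M ^ t)ᵀ‖ = ‖M ^ t‖ := by
      have : (M ^ t)ᵀ = (M ^ t)ᴴ := by
        ext i j; simp [Matrix.conjTranspose_apply]
      rw [this]
      exact Matrix.l2_opNorm_conjTranspose _
    have hMt0 : 0 ≤ ‖M ^ t‖ := norm_nonneg _
    have h1 : ‖(M ^ t)ᵀ * S * M ^ t‖ ≤ ‖M ^ t‖ * ‖S‖ * ‖M ^ t‖ := by
      calc ‖(M ^ t)ᵀ * S * M ^ t‖ ≤ ‖(M ^ t)ᵀ * S‖ * ‖M ^ t‖ := norm_mul_le _ _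
        _ ≤ ‖(M ^ t)ᵀ‖ * ‖S‖ * ‖M ^ t‖ := by gcongr; exact norm_mul_le _ _
        _ = ‖M ^ t‖ * ‖S‖ * ‖M ^ t‖ := by rw [hT]
    have h2 : ‖M ^ t‖ * ‖S‖ * ‖M ^ t‖ ≤ (κ * (1-γ)^t) * c * (κ * (1-γ)^t) := by
      have hκγ : 0 ≤ κ * (1-γ)^t := by positivity
      exact mul_le_mul (mul_le_mul (hMt t) hc (norm_nonneg S) hκγ) (hMt t)
        (norm_nonneg _) (by positivity)
    have h3 : (κ * (1-γ)^t) * c * (κ * (1-γ)^t) ≤ c * κ ^ 2 * (1 - γ) ^ t := by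
      have he : (κ * (1-γ)^t) * c * (κ * (1-γ)^t) = c * κ^2 * ((1-γ)^t * (1-γ)^t) := by
        ring
      rw [he]
      have h4 : (1-γ)^t * (1-γ)^t ≤ 1 * (1-γ)^t :=
        mul_le_mul_of_nonneg_right (pow_le_one₀ hγ' (by linarith)) (pow_nonneg hγ' t)
      have h5 : 0 ≤ c * κ^2 := by positivity
      nlinarith [pow_nonneg hγ' t]
    linarith
  have hgeo : Summable (fun t : ℕ => c * κ ^ 2 * (1 - γ) ^ t) :=
    (summable_geometric_of_lt_one hγ' hγ'').mul_left _
  have hsum : Summable (fun t : ℕ => (M ^ t)ᵀ * S * M ^ t) :=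
    Summable.of_norm_bounded hgeo hbound
  refine ⟨hsum, ?_⟩
  calc ‖∑' t : ℕ, (M ^ t)ᵀ * S * M ^ t‖ ≤ ∑' t : ℕ, c * κ ^ 2 * (1 - γ) ^ t :=
        tsum_of_norm_bounded hgeo.hasSum hbound
    _ = c * κ ^ 2 * (1 - (1 - γ))⁻¹ := by
        rw [tsum_mul_left, tsum_geometric_of_lt_one hγ' hγ'']
    _ = c * κ ^ 2 / γ := by rw [show 1 - (1 - γ) = γ by ring, div_eq_mul_inv]
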